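/- If P and Q are probability mass functions on a finite set A with Q(a) > 0 whenever P(a) > 0, then d_TV(P, Q) ≤ sqrt((1/2)·D_KL(P ‖ Q)), where D_KL(P ‖ Q) = Σ_a P(a)·log(P(a)/Q(a)) (Pinsker's inequality). -/

import Mathlib

open Real Finset

/-- Log-sum inequality. -/
lemma log_sum_ineq {A : Type*} (s : Finset A) (f g : A → ℝ)
    (hf : ∀ a ∈ s, 0 ≤ f a) (hg : ∀ a ∈ s, 0 ≤ g a)
    (hfg : ∀ a ∈ s, 0 < f a → 0 < g a) :
    (∑ a ∈ s, f a) * Real.log ((∑ a ∈ s, f a) / (∑ a ∈ s, g a)) ≤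
      ∑ a ∈ s, f a * Real.log (f a / g a) := by
  rcases eq_or_lt_of_le (Finset.sum_nonneg hf) with hF | hF
  · have hf0 : ∀ a ∈ s, f a = 0 := (Finset.sum_eq_zero_iff_of_nonneg hf).mp hF.symm
    rw [← hF, zero_mul]
    apply Finset.sum_nonneg
    intro a ha
    rw [hf0 a ha, zero_mul]
  · obtain ⟨a0, ha0, hfa0⟩ : ∃ a ∈ s, 0 < f a := by
      by_contra h
      push_neg at h
      exact absurd (Finset.sum_nonpos h) (not_le.2 hF)
    have hG : 0 < ∑ a ∈ s, g a :=
      Finset.sum_pos' hg ⟨a0, ha0, hfg a0 ha0 hfa0⟩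
    set F := ∑ a ∈ s, f a with hFdef
    set G := ∑ a ∈ s, g a with hGdef
    set t := s.filter (fun a => 0 < f a) with ht
    have hts : t ⊆ s := Finset.filter_subset _ _
    have hzero : ∀ a ∈ s, a ∉ t → f a = 0 := by
      intro a ha hna
      rw [ht, Finset.mem_filter] at hna
      push_neg at hna
      exact le_antisymm (hna ha) (hf a ha)
    have hFt : F = ∑ a ∈ t, f a := by
      rw [hFdef]
      exact (Finset.sum_subset hts (fun a ha hna => hzero a ha hna)).symm
    have hRt : ∑ a ∈ s, f a * Real.log (f a / g a)
        = ∑ a ∈ t, f a * Real.log (f a / g a) := by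
      refine (Finset.sum_subset hts (fun a ha hna => ?_)).symm
      rw [hzero a ha hna, zero_mul]
    have hgt : ∑ a ∈ t, g a ≤ G := by
      rw [hGdef]
      exact Finset.sum_le_sum_of_subset_of_nonneg hts (fun a ha _ => hg a ha)
    have key : ∀ a ∈ t, f a * Real.log (F / G) ≤
        f a * Real.log (f a / g a) - f a + (F / G) * g a := by
      intro a hat
      have has : a ∈ s := hts hat
      have hfa : 0 < f a := (Finset.mem_filter.mp hat).2
      have hga : 0 < g a := hfg a has hfa
      have hx : 0 < (f a / g a) / (F / G) := by positivity
      have hlog : 1 - ((f a / g a) / (F / G))⁻¹ ≤ Real.log ((f a / g a) / (F / G)) :=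
        Real.one_sub_inv_le_log_of_pos hx
      rw [Real.log_div (by positivity) (by positivity)] at hlog
      have hinv : ((f a / g a) / (F / G))⁻¹ = (F * g a) / (G * f a) := by
        field_simp
      rw [hinv] at hlog
      have h2 : f a * (1 - (F * g a) / (G * f a)) ≤
          f a * (Real.log (f a / g a) - Real.log (F / G)) :=
        mul_le_mul_of_nonneg_left hlog (le_of_lt hfa)
      have h3 : f a * (1 - (F * g a) / (G * f a)) = f a - (F / G) * g a := by
        field_simp
      rw [h3] at h2
      linarith [h2]
    calc F * Real.log (F / G) = ∑ a ∈ t, f a * Real.log (F / G) := by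
          rw [← Finset.sum_mul, ← hFt]
      _ ≤ ∑ a ∈ t, (f a * Real.log (f a / g a) - f a + (F / G) * g a) :=
          Finset.sum_le_sum key
      _ = (∑ a ∈ t, f a * Real.log (f a / g a)) - (∑ a ∈ t, f a)
            + (F / G) * ∑ a ∈ t, g a := by
          rw [Finset.sum_add_distrib, Finset.sum_sub_distrib, ← Finset.mul_sum]
      _ ≤ (∑ a ∈ t, f a * Real.log (f a / g a)) - F + (F / G) * G := by
          have h1 : (F / G) * ∑ a ∈ t, g a ≤ (F / G) * G :=
            mul_le_mul_of_nonneg_left hgt (by positivity)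
          rw [← hFt]
          linarith
      _ = ∑ a ∈ s, f a * Real.log (f a / g a) := by
          rw [hRt]
          field_simp
          ring

/-- Binary Pinsker, case p < 1. -/
lemma binary_pinsker {p q : ℝ} (hq : 0 < q) (hqp : q ≤ p) (hp : p < 1) :
    2 * (p - q) ^ 2 ≤ p * Real.log (p / q) + (1 - p) * Real.log ((1 - p) / (1 - q)) := by
  have hp0 : 0 < p := lt_of_lt_of_le hq hqp
  set F : ℝ → ℝ := fun x => p * Real.log p - p * Real.log x + (1 - p) * Real.log (1 - p)
      - (1 - p) * Real.log (1 - x) - 2 * (p - x) ^ 2 with hFdef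
  have hderiv : ∀ x ∈ Set.Ioo (0 : ℝ) 1, HasDerivAt F
      (0 - p * x⁻¹ - (1 - p) * -(1 - x)⁻¹ - 2 * (2 * (p - x) * -1)) x := by
    intro x hx
    have hx0 : (0 : ℝ) < x := hx.1
    have hx1 : x < 1 := hx.2
    have l1 : HasDerivAt (fun x : ℝ => Real.log x) x⁻¹ x := Real.hasDerivAt_log hx0.ne'
    have l2 : HasDerivAt (fun x : ℝ => Real.log (1 - x)) (-(1 - x)⁻¹) x := by
      have hne : (1 : ℝ) - x ≠ 0 := by linarith
      have h := (Real.hasDerivAt_log hne).comp x ((hasDerivAt_id x).const_sub 1)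
      exact h.congr_deriv (by simp)
    have l3 : HasDerivAt (fun x : ℝ => 2 * (p - x) ^ 2) (2 * (2 * (p - x) * -1)) x := by
      have h := (((hasDerivAt_id x).const_sub p).pow 2).const_mul (2 : ℝ)
      simpa using h
    exact ((((hasDerivAt_const x (p * Real.log p)).sub (l1.const_mul p)).add_const
      ((1 - p) * Real.log (1 - p))).sub (l2.const_mul (1 - p))).sub l3
  have hsub : Set.Icc q p ⊆ Set.Ioo (0 : ℝ) 1 := fun x hx => ⟨lt_of_lt_of_le hq hx.1,
    lt_of_le_of_lt hx.2 hp⟩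
  have hanti : AntitoneOn F (Set.Icc q p) := by
    apply antitoneOn_of_deriv_nonpos (convex_Icc q p)
    · intro x hx
      exact (hderiv x (hsub hx)).continuousAt.continuousWithinAt
    · intro x hx
      rw [interior_Icc] at hx
      exact ((hderiv x (hsub (Set.Ioo_subset_Icc_self hx))).differentiableAt).differentiableWithinAt
    · intro x hx
      rw [interior_Icc] at hx
      have hxI : x ∈ Set.Ioo (0 : ℝ) 1 := hsub (Set.Ioo_subset_Icc_self hx)
      rw [(hderiv x hxI).deriv]
      have hx0 : (0 : ℝ) < x := hxI.1
      have hx1 : x < 1 := hxI.2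
      have hxp : x ≤ p := le_of_lt hx.2
      have hxne : x ≠ 0 := hx0.ne'
      have h1xne : (1 : ℝ) - x ≠ 0 := by linarith
      have heq : 0 - p * x⁻¹ - (1 - p) * -(1 - x)⁻¹ - 2 * (2 * (p - x) * -1)
          = ((p - x) * (4 * x * (1 - x) - 1)) / (x * (1 - x)) := by
        field_simp
        ring
      rw [heq]
      apply div_nonpos_of_nonpos_of_nonneg
      · nlinarith [sq_nonneg (2 * x - 1)]
      · nlinarith
  have hFp : F p = 0 := by
    simp [hFdef]
  have hFq : F p ≤ F q := hanti (Set.left_mem_Icc.2 hqp) (Set.right_mem_Icc.2 hqp) hqp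
  rw [hFp] at hFq
  have e1 : Real.log (p / q) = Real.log p - Real.log q := Real.log_div hp0.ne' hq.ne'
  have e2 : Real.log ((1 - p) / (1 - q)) = Real.log (1 - p) - Real.log (1 - q) :=
    Real.log_div (by linarith) (by intro h; nlinarith [hq, hqp])
  rw [e1, e2]
  have := hFq
  rw [hFdef] at this
  simp only at this
  nlinarith [this]

/-- Binary Pinsker, case p = 1. -/
lemma binary_pinsker_one {q : ℝ} (hq : 0 < q) (hq1 : q ≤ 1) :
    2 * (1 - q) ^ 2 ≤ -Real.log q := by
  set G : ℝ → ℝ := fun x => -Real.log x - 2 * (1 - x) ^ 2 with hGdef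
  have hderiv : ∀ x ∈ Set.Ioi (0 : ℝ), HasDerivAt G (-x⁻¹ - 2 * (2 * (1 - x) * -1)) x := by
    intro x hx
    have l1 : HasDerivAt (fun x : ℝ => Real.log x) x⁻¹ x := Real.hasDerivAt_log (ne_of_gt hx)
    have l3 : HasDerivAt (fun x : ℝ => 2 * (1 - x) ^ 2) (2 * (2 * (1 - x) * -1)) x := by
      have h := (((hasDerivAt_id x).const_sub (1 : ℝ)).pow 2).const_mul (2 : ℝ)
      simpa using h
    exact (l1.neg).sub l3
  have hsub : Set.Icc q 1 ⊆ Set.Ioi (0 : ℝ) := fun x hx => lt_of_lt_of_le hq hx.1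
  have hanti : AntitoneOn G (Set.Icc q 1) := by
    apply antitoneOn_of_deriv_nonpos (convex_Icc q 1)
    · intro x hx
      exact (hderiv x (hsub hx)).continuousAt.continuousWithinAt
    · intro x hx
      rw [interior_Icc] at hx
      exact ((hderiv x (hsub (Set.Ioo_subset_Icc_self hx))).differentiableAt).differentiableWithinAt
    · intro x hx
      rw [interior_Icc] at hx
      have hx0 : (0 : ℝ) < x := lt_trans hq hx.1
      rw [(hderiv x hx0).deriv]
      have hxne : x ≠ 0 := hx0.ne'
      have heq : -x⁻¹ - 2 * (2 * (1 - x) * -1) = -((2 * x - 1) ^ 2) / x := by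
        field_simp
        ring
      rw [heq]
      apply div_nonpos_of_nonpos_of_nonneg
      · nlinarith [sq_nonneg (2 * x - 1)]
      · linarith
  have hG1 : G 1 = 0 := by simp [hGdef]
  have hGq : G 1 ≤ G q := hanti (Set.left_mem_Icc.2 hq1) (Set.right_mem_Icc.2 hq1) hq1
  rw [hG1] at hGq
  rw [hGdef] at hGq
  simp only at hGq
  linarith

theorem pinsker_inequality
    {A : Type*} [Fintype A]
    (P Q : A → ℝ)
    (hP0 : ∀ a, 0 ≤ P a) (hP1 : ∑ a, P a = 1)
    (hQ0 : ∀ a, 0 ≤ Q a) (hQ1 : ∑ a, Q a = 1)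
    (hac : ∀ a, 0 < P a → 0 < Q a) :
    (1/2) * ∑ a, |P a - Q a| ≤
      Real.sqrt ((1/2) * ∑ a, P a * Real.log (P a / Q a)) := by
  classical
  set S := Finset.univ.filter (fun a => Q a < P a) with hSdef
  set T := Finset.univ.filter (fun a => ¬ Q a < P a) with hTdef
  set p := ∑ a ∈ S, P a with hpdef
  set q := ∑ a ∈ S, Q a with hqdef
  have hsplitP : p + ∑ a ∈ T, P a = 1 := by
    rw [hpdef, hSdef, hTdef, Finset.sum_filter_add_sum_filter_not, hP1]
  have hsplitQ : q + ∑ a ∈ T, Q a = 1 := by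
    rw [hqdef, hSdef, hTdef, Finset.sum_filter_add_sum_filter_not, hQ1]
  -- total variation equals p - q
  have hLHS : (1/2 : ℝ) * ∑ a, |P a - Q a| = p - q := by
    have h1 : ∑ a, |P a - Q a| = ∑ a ∈ S, |P a - Q a| + ∑ a ∈ T, |P a - Q a| := by
      rw [hSdef, hTdef, Finset.sum_filter_add_sum_filter_not]
    have h2 : ∑ a ∈ S, |P a - Q a| = p - q := by
      rw [hpdef, hqdef, ← Finset.sum_sub_distrib]
      apply Finset.sum_congr rfl
      intro a ha
      rw [hSdef, Finset.mem_filter] at ha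
      exact abs_of_pos (sub_pos.2 ha.2)
    have h3 : ∑ a ∈ T, |P a - Q a| = (∑ a ∈ T, Q a) - (∑ a ∈ T, P a) := by
      rw [← Finset.sum_sub_distrib]
      apply Finset.sum_congr rfl
      intro a ha
      rw [hTdef, Finset.mem_filter] at ha
      rw [abs_of_nonpos (sub_nonpos.2 (not_lt.1 ha.2))]
      ring
    rw [h1, h2, h3]
    linarith
  rw [hLHS]
  rcases S.eq_empty_or_nonempty with hSe | hSne
  · have hp0 : p = 0 := by rw [hpdef, hSe, Finset.sum_empty]
    have hq0 : q = 0 := by rw [hqdef, hSe, Finset.sum_empty]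
    rw [hp0, hq0, sub_zero]
    exact Real.sqrt_nonneg _
  · obtain ⟨a0, ha0⟩ := hSne
    have ha0' : Q a0 < P a0 := by
      rw [hSdef, Finset.mem_filter] at ha0
      exact ha0.2
    have hqpos : 0 < q := by
      rw [hqdef]
      exact Finset.sum_pos' (fun a _ => hQ0 a)
        ⟨a0, ha0, hac a0 (lt_of_le_of_lt (hQ0 a0) ha0')⟩
    have hqp : q < p := by
      rw [hpdef, hqdef]
      apply Finset.sum_lt_sum_of_nonempty ⟨a0, ha0⟩
      intro a ha
      rw [hSdef, Finset.mem_filter] at ha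
      exact ha.2
    have hTPnn : 0 ≤ ∑ a ∈ T, P a := Finset.sum_nonneg (fun a _ => hP0 a)
    have hTQnn : 0 ≤ ∑ a ∈ T, Q a := Finset.sum_nonneg (fun a _ => hQ0 a)
    have hp1 : p ≤ 1 := by linarith
    -- KL decomposition
    have hKsplit : ∑ a, P a * Real.log (P a / Q a)
        = ∑ a ∈ S, P a * Real.log (P a / Q a) + ∑ a ∈ T, P a * Real.log (P a / Q a) := by
      rw [hSdef, hTdef, Finset.sum_filter_add_sum_filter_not]
    have hbound1 : p * Real.log (p / q) ≤ ∑ a ∈ S, P a * Real.log (P a / Q a) :=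
      log_sum_ineq S P Q (fun a _ => hP0 a) (fun a _ => hQ0 a) (fun a _ h => hac a h)
    have hbound2 : (1 - p) * Real.log ((1 - p) / (1 - q)) ≤
        ∑ a ∈ T, P a * Real.log (P a / Q a) := by
      have h := log_sum_ineq T P Q (fun a _ => hP0 a) (fun a _ => hQ0 a) (fun a _ h => hac a h)
      have e1 : ∑ a ∈ T, P a = 1 - p := by linarith
      have e2 : ∑ a ∈ T, Q a = 1 - q := by linarith
      rw [e1, e2] at h
      exact h
    have hbin : 2 * (p - q) ^ 2 ≤
        p * Real.log (p / q) + (1 - p) * Real.log ((1 - p) / (1 - q)) := by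
      rcases lt_or_eq_of_le hp1 with hplt | hpeq
      · exact binary_pinsker hqpos (le_of_lt hqp) hplt
      · have hq1 : q ≤ 1 := by linarith
        have h := binary_pinsker_one hqpos hq1
        rw [hpeq]
        have e3 : Real.log (1 / q) = -Real.log q := by
          rw [Real.log_div one_ne_zero hqpos.ne', Real.log_one, zero_sub]
        rw [e3]
        simp only [sub_self, zero_mul, add_zero, one_mul]
        exact h
    have hK : (p - q) ^ 2 ≤ (1/2 : ℝ) * ∑ a, P a * Real.log (P a / Q a) := by
      rw [hKsplit]
      linarith
    calc p - q = Real.sqrt ((p - q) ^ 2) := (Real.sqrt_sq (by linarith)).symm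
      _ ≤ Real.sqrt ((1/2) * ∑ a, P a * Real.log (P a / Q a)) := Real.sqrt_le_sqrt hK
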